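/- Let G be a 2-vertex-connected graph with a designated edge e, and let P_0 = e, P_1, ..., P_k be an open ear decomposition of G starting with e. For each i with 1 ≤ i ≤ k, let C_i be a cycle consisting of e, the edges of P_i, and two vertex-disjoint paths within the union of ears P_0,...,P_{i-1} connecting the endpoints of P_i to the endpoints of e. Then the cycles C_1,...,C_k form a cycle basis of G, and every C_i contains e. -/

import Mathlib

open SimpleGraph

/-- A cycle in `G`: a (finite) connected `2`-regular subgraph. -/
def IsCycleSubgraph {V : Type*} {G : SimpleGraph V} (C : G.Subgraph) : Prop :=
  C.verts.Finite ∧ C.Connected ∧ ∀ v ∈ C.verts, (C.neighborSet v).ncard = 2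

open Classical in
/-- The characteristic vector over `𝔽₂` of the edge set of a subgraph. -/
noncomputable def edgeVec {V : Type*} {G : SimpleGraph V} (C : G.Subgraph) :
    Sym2 V → ZMod 2 :=
  fun e => if e ∈ C.edgeSet then 1 else 0

/-- The cycle space of `G`: the `𝔽₂`-span of the edge vectors of cycles of `G`. -/
noncomputable def cycleSpace {V : Type*} (G : SimpleGraph V) :
    Submodule (ZMod 2) (Sym2 V → ZMod 2) :=
  Submodule.span (ZMod 2) (edgeVec '' {C : G.Subgraph | IsCycleSubgraph C})

/-- A cycle basis of `G`: a set of cycles whose edge vectors form a basis of the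
cycle space of `G`. -/
def IsCycleBasis {V : Type*} {G : SimpleGraph V} (B : Set G.Subgraph) : Prop :=
  (∀ C ∈ B, IsCycleSubgraph C) ∧
  LinearIndependent (ZMod 2) (fun C : B => edgeVec C.1) ∧
  Submodule.span (ZMod 2) (edgeVec '' B) = cycleSpace G

/-- A graph is `2`-vertex-connected if it has at least three vertices and deleting
any single vertex leaves it connected. -/
def TwoConnected {V : Type*} (G : SimpleGraph V) : Prop :=
  3 ≤ Nat.card V ∧ ∀ v : V, (G.induce ({v}ᶜ : Set V)).Connected

/-- An open ear decomposition of `G`: a sequence of paths (ears) `W 0, …, W k`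
whose union is `G`, where `W 0` is a single edge, each later ear has its two
distinct endpoints in earlier ears and all interior vertices new, and distinct
ears share no edges. -/
def IsOpenEarDecomp {V : Type*} (G : SimpleGraph V) (k : ℕ) (a b : Fin (k + 1) → V)
    (W : ∀ i, G.Walk (a i) (b i)) : Prop :=
  (∀ i, (W i).IsPath) ∧ (W 0).length = 1 ∧
  (∀ i : Fin (k + 1), 0 < i.1 →
    a i ≠ b i ∧
    (∃ j, j < i ∧ a i ∈ (W j).support) ∧
    (∃ j, j < i ∧ b i ∈ (W j).support) ∧
    (∀ v ∈ (W i).support, v ≠ a i → v ≠ b i → ∀ j, j < i → v ∉ (W j).support)) ∧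
  (∀ i j, i ≠ j → ∀ e ∈ (W i).edges, e ∉ (W j).edges) ∧
  (∀ e, e ∈ G.edgeSet ↔ ∃ i, e ∈ (W i).edges) ∧
  (∀ v : V, ∃ i, v ∈ (W i).support)

section Aux

variable {V : Type*} [Fintype V] {G : SimpleGraph V}

noncomputable def deg (x : Sym2 V → ZMod 2) (v : V) : ZMod 2 := ∑ w : V, x s(v, w)

omit [Fintype V] in
lemma mem_support_of_mem_edges' {u v t : V} (p : G.Walk u v) {e : Sym2 V}
    (he : e ∈ p.edges) (ht : t ∈ e) : t ∈ p.support := by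
  induction e with
  | h x y =>
    rw [Sym2.mem_iff] at ht
    rcases ht with rfl|rfl
    · exact Walk.fst_mem_support_of_mem_edges p he
    · exact Walk.snd_mem_support_of_mem_edges p he

lemma deg_add (x y : Sym2 V → ZMod 2) (v : V) : deg (x + y) v = deg x v + deg y v := by
  simp [deg, Finset.sum_add_distrib]

open Classical in
lemma deg_cycle {C : G.Subgraph} (hC : IsCycleSubgraph C) (v : V) : deg (edgeVec C) v = 0 := by
  classical
  have h1 : deg (edgeVec C) v = ((Finset.univ.filter (fun w => C.Adj v w)).card : ZMod 2) := by
    rw [deg, Finset.card_filter]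
    push_cast
    apply Finset.sum_congr rfl
    intro w _
    simp [edgeVec, SimpleGraph.Subgraph.mem_edgeSet]
  rw [h1]
  have hcard : (Finset.univ.filter (fun w => C.Adj v w)).card = (C.neighborSet v).ncard := by
    rw [Set.ncard_eq_toFinset_card']
    congr 1
    ext w
    simp [SimpleGraph.Subgraph.neighborSet]
    convert (Set.mem_toFinset (s := {w | C.Adj v w}) (a := w)).symm
    · rfl
    · congr 1; exact Subsingleton.elim _ _
  by_cases hv : v ∈ C.verts
  · rw [hcard, hC.2.2 v hv]; decide
  · have h0 : Finset.univ.filter (fun w => C.Adj v w) = ∅ := by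
      ext w; simp only [Finset.mem_filter, Finset.mem_univ, true_and, Finset.notMem_empty,
        iff_false]
      intro h; exact hv h.fst_mem
    rw [h0]; simp

lemma ear_aux (x : Sym2 V → ZMod 2) (hdeg : ∀ v, deg x v = 0)
    {u w : V} (P : G.Walk u w) : ∀ (u₀ : V) (h0 : G.Adj u₀ u)
    (_hp : (Walk.cons h0 P).IsPath)
    (_hin : ∀ v ∈ (Walk.cons h0 P).support, v ≠ u₀ → v ≠ w →
       ∀ e : Sym2 V, x e ≠ 0 → v ∈ e → e ∈ (Walk.cons h0 P).edges),
    ∀ e ∈ P.edges, x e = x s(u₀, u) := by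
  classical
  induction P with
  | nil => intro u₀ h0 hp hin e he; simp at he
  | @cons u u'' w h' R ih =>
    intro u₀ h0 hp hin e he
    have hnd : (u₀ :: (u :: R.support)).Nodup := by
      have := hp.support_nodup
      simpa [Walk.support_cons] using this
    have hu0_ne_u : u₀ ≠ u := by
      intro h; exact (List.nodup_cons.mp hnd).1 (h ▸ List.mem_cons_self)
    have hu0_notin : u₀ ∉ u :: R.support := (List.nodup_cons.mp hnd).1
    have hnd2 : (u :: R.support).Nodup := (List.nodup_cons.mp hnd).2
    have hu_notin_R : u ∉ R.support := (List.nodup_cons.mp hnd2).1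
    have hu_ne_u'' : u ≠ u'' := fun h => hu_notin_R (h ▸ R.start_mem_support)
    have hu0_ne_u'' : u₀ ≠ u'' := by
      intro h; exact hu0_notin (List.mem_cons_of_mem _ (h ▸ R.start_mem_support))
    have hu_ne_w : u ≠ w := fun h => hu_notin_R (h ▸ R.end_mem_support)
    have hkey : x s(u, u'') = x s(u₀, u) := by
      have hmemu : u ∈ (Walk.cons h0 (Walk.cons h' R)).support := by
        simp [Walk.support_cons]
      have hsum : ∑ t : V, x s(u, t) = ∑ t ∈ ({u₀, u''} : Finset V), x s(u, t) := by
        symm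
        apply Finset.sum_subset (Finset.subset_univ _)
        intro t _ ht
        by_contra hxt
        have hmm := hin u hmemu (Ne.symm hu0_ne_u) hu_ne_w s(u, t) hxt (Sym2.mem_mk_left _ _)
        simp only [Walk.edges_cons, List.mem_cons] at hmm
        rcases hmm with h1 | h1 | h1
        · have ht' : t = u₀ := by
            rw [Sym2.eq_iff] at h1
            rcases h1 with ⟨h2, h3⟩ | ⟨h2, h3⟩
            · exact absurd h2.symm hu0_ne_u
            · exact h3
          simp [ht'] at ht
        · have ht' : t = u'' := by
            rw [Sym2.eq_iff] at h1
            rcases h1 with ⟨h2, h3⟩ | ⟨h2, h3⟩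
            · exact h3
            · exact absurd h2 hu_ne_u''
          simp [ht'] at ht
        · exact hu_notin_R (mem_support_of_mem_edges' R h1 (Sym2.mem_mk_left _ _))
      have hpair : ∑ t ∈ ({u₀, u''} : Finset V), x s(u, t) = x s(u, u₀) + x s(u, u'') :=
        Finset.sum_pair hu0_ne_u''
      have h0' : x s(u, u₀) + x s(u, u'') = 0 := by
        rw [← hpair, ← hsum]; exact hdeg u
      have hsw : x s(u, u₀) = x s(u₀, u) := by rw [Sym2.eq_swap]
      rw [← hsw]
      revert h0'
      generalize x s(u, u₀) = A
      generalize x s(u, u'') = B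
      revert A B; decide
    have hR : ∀ e ∈ R.edges, x e = x s(u, u'') := by
      apply ih u h' hp.of_cons
      intro v hv hvu hvw e' hxe' hve'
      have hvu0 : v ≠ u₀ := by
        intro h; subst h
        exact hu0_notin (by simpa [Walk.support_cons] using hv)
      have hv' : v ∈ (Walk.cons h0 (Walk.cons h' R)).support := by
        rw [Walk.support_cons]; exact List.mem_cons_of_mem _ hv
      have hmm := hin v hv' hvu0 hvw e' hxe' hve'
      simp only [Walk.edges_cons, List.mem_cons] at hmm ⊢
      rcases hmm with h1 | h1
      · exfalso
        subst h1
        rw [Sym2.mem_iff] at hve'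
        rcases hve' with rfl | rfl
        · exact hvu0 rfl
        · exact hvu rfl
      · exact h1
    simp only [Walk.edges_cons, List.mem_cons] at he
    rcases he with rfl | he
    · exact hkey
    · rw [hR e he]; exact hkey

lemma ear_const (x : Sym2 V → ZMod 2) (hdeg : ∀ v, deg x v = 0)
    {u w : V} (P : G.Walk u w) (hP : P.IsPath)
    (hin : ∀ v ∈ P.support, v ≠ u → v ≠ w → ∀ e : Sym2 V, x e ≠ 0 → v ∈ e → e ∈ P.edges) :
    ∀ e ∈ P.edges, ∀ e' ∈ P.edges, x e = x e' := by
  cases P with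
  | nil => intro e he; simp at he
  | @cons u u' w h0 Q =>
    have hall : ∀ e ∈ (Walk.cons h0 Q).edges, x e = x s(u, u') := by
      intro e he
      simp only [Walk.edges_cons, List.mem_cons] at he
      rcases he with rfl | he
      · rfl
      · exact ear_aux x hdeg Q u h0 hP hin e he
    intro e he e' he'
    rw [hall e he, hall e' he']

omit [Fintype V] in
lemma edges_of_length_one {u v : V} (P : G.Walk u v) (h : P.length = 1) :
    P.edges = [s(u, v)] := by
  cases P with
  | nil => simp at h
  | cons h' q =>
    cases q with
    | nil => simp
    | cons h'' r => simp [Walk.length_cons] at h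

end Aux

theorem stmt2 {V : Type*} [Fintype V] (G : SimpleGraph V) (t1 t2 : V)
    (he : G.Adj t1 t2) (hG : TwoConnected G)
    (k : ℕ) (a b : Fin (k + 1) → V) (W : ∀ i, G.Walk (a i) (b i))
    (hear : IsOpenEarDecomp G k a b W) (ha0 : a 0 = t1) (hb0 : b 0 = t2)
    (C : Fin k → G.Subgraph)
    (hC : ∀ i : Fin k,
      IsCycleSubgraph (C i) ∧
      s(t1, t2) ∈ (C i).edgeSet ∧
      (∀ e ∈ (W i.succ).edges, e ∈ (C i).edgeSet) ∧
      (∀ e ∈ (C i).edgeSet,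
        e ∈ (W i.succ).edges ∨ ∃ j : Fin (k + 1), j < i.succ ∧ e ∈ (W j).edges)) :
    IsCycleBasis (Set.range C) ∧ ∀ i, s(t1, t2) ∈ (C i).edgeSet := by
  classical
  obtain ⟨hpath, hlen0, hfresh, hdisj, hedges, hsupp⟩ := hear
  have hone : ∀ c : ZMod 2, c ≠ 0 → c = 1 := by decide
  have hW0edges : ∀ e ∈ (W 0).edges, e = s(t1, t2) := by
    intro e heW
    rw [edges_of_length_one (W 0) hlen0] at heW
    simp only [List.mem_singleton] at heW
    rw [heW, ha0, hb0]
  -- the key spanning induction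
  have key : ∀ n : ℕ, ∀ x : Sym2 V → ZMod 2, (∀ v, deg x v = 0) →
      (∀ e, x e ≠ 0 → ∃ j : Fin (k + 1), j.1 < n ∧ e ∈ (W j).edges) →
      x ∈ Submodule.span (ZMod 2) (edgeVec '' Set.range C) := by
    intro n
    induction n with
    | zero =>
      intro x hdeg hx
      have hx0 : x = 0 := by
        funext e
        by_contra h
        obtain ⟨j, hj, -⟩ := hx e h
        omega
      rw [hx0]; exact zero_mem _
    | succ n ih =>
      intro x hdeg hx
      by_cases hn0 : n = 0
      · subst hn0
        have hx0 : x = 0 := by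
          have hst : x s(t1, t2) = 0 := by
            have hd := hdeg t1
            rw [deg] at hd
            have hsum : ∑ w : V, x s(t1, w) = x s(t1, t2) := by
              apply Finset.sum_eq_single t2
              · intro w _ hw
                by_contra hxw
                obtain ⟨j, hj, hje⟩ := hx s(t1, w) hxw
                have hj0 : j = 0 := by
                  apply Fin.ext; simp only [Fin.val_zero]; omega
                subst hj0
                have := hW0edges _ hje
                rw [Sym2.eq_iff] at this
                rcases this with ⟨h1, h2⟩ | ⟨h1, h2⟩
                · exact hw h2
                · exact he.ne h1
              · intro h; exact absurd (Finset.mem_univ t2) h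
            rw [hsum] at hd; exact hd
          funext e
          by_contra hxe
          obtain ⟨j, hj, hje⟩ := hx e hxe
          have hj0 : j = 0 := by apply Fin.ext; simp only [Fin.val_zero]; omega
          subst hj0
          rw [hW0edges _ hje] at hxe
          exact hxe hst
        rw [hx0]; exact zero_mem _
      · by_cases hnk : n ≤ k
        swap
        · apply ih x hdeg
          intro e hxe
          obtain ⟨j, hj, hje⟩ := hx e hxe
          exact ⟨j, by omega, hje⟩
        · set m : Fin (k + 1) := ⟨n, by omega⟩ with hm_def
          set i' : Fin k := ⟨n - 1, by omega⟩ with hi'_def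
          have hm : i'.succ = m := by
            apply Fin.ext
            simp only [Fin.val_succ]
            show n - 1 + 1 = n
            omega
          have hmval : m.1 = n := rfl
          by_cases hB : ∀ e ∈ (W m).edges, x e = 0
          · apply ih x hdeg
            intro e hxe
            obtain ⟨j, hj, hje⟩ := hx e hxe
            refine ⟨j, ?_, hje⟩
            rcases Nat.lt_or_ge j.1 n with h | h
            · exact h
            · exfalso
              have hjm : j = m := by apply Fin.ext; rw [hmval]; omega
              subst hjm
              exact hxe (hB e hje)
          · push_neg at hB
            obtain ⟨e0, he0, hxe0⟩ := hB
            have hin : ∀ v ∈ (W m).support, v ≠ a m → v ≠ b m →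
                ∀ e : Sym2 V, x e ≠ 0 → v ∈ e → e ∈ (W m).edges := by
              intro v hv hva hvb e hxe hve
              obtain ⟨j, hj, hje⟩ := hx e hxe
              by_cases hjm : j = m
              · rwa [hjm] at hje
              · exfalso
                have hjlt : j < m := by
                  rw [Fin.lt_def, hmval]
                  have : j.1 ≠ n := fun h => hjm (by apply Fin.ext; rw [hmval]; omega)
                  omega
                have hvj : v ∈ (W j).support := mem_support_of_mem_edges' (W j) hje hve
                exact (hfresh m (by rw [hmval]; omega)).2.2.2 v hv hva hvb j hjlt hvj
            have hconst := ear_const x hdeg (W m) (hpath m) hin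
            have hall : ∀ e ∈ (W m).edges, x e = 1 := by
              intro e heW
              have := hconst e heW e0 he0
              rw [this]
              exact hone _ hxe0
            set y : Sym2 V → ZMod 2 := x + edgeVec (C i') with hy_def
            have hydeg : ∀ v, deg y v = 0 := by
              intro v
              rw [hy_def, deg_add, hdeg, deg_cycle (hC i').1]
              simp
            have hysupp : ∀ e, y e ≠ 0 → ∃ j : Fin (k + 1), j.1 < n ∧ e ∈ (W j).edges := by
              intro e hye
              have hem : e ∉ (W m).edges := by
                intro hem
                have hx1 : x e = 1 := hall e hem
                have hc1 : edgeVec (C i') e = 1 := by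
                  have : e ∈ (C i').edgeSet := (hC i').2.2.1 e (by rwa [hm])
                  simp [edgeVec, this]
                apply hye
                rw [hy_def, Pi.add_apply, hx1, hc1]
                decide
              by_cases hxe : x e = 0
              · have hce : e ∈ (C i').edgeSet := by
                  by_contra hce
                  apply hye
                  rw [hy_def, Pi.add_apply, hxe]
                  simp [edgeVec, hce]
                rcases (hC i').2.2.2 e hce with h | ⟨j, hj, hje⟩
                · exact absurd (by rwa [hm] at h) hem
                · refine ⟨j, ?_, hje⟩
                  rw [hm, Fin.lt_def, hmval] at hj
                  omega
              · obtain ⟨j, hj, hje⟩ := hx e hxe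
                refine ⟨j, ?_, hje⟩
                have h1 : j ≠ m := fun h => hem (h ▸ hje)
                have h2 : j.1 ≠ n := fun h => h1 (by apply Fin.ext; rw [hmval]; omega)
                omega
            have hy := ih y hydeg hysupp
            have hxy : x = y + edgeVec (C i') := by
              funext e
              rw [Pi.add_apply, hy_def, Pi.add_apply]
              generalize x e = A
              generalize edgeVec (C i') e = B
              revert A B; decide
            rw [hxy]
            exact add_mem hy (Submodule.subset_span ⟨C i', Set.mem_range_self i', rfl⟩)
  -- pick a private edge for each cycle
  have hne : ∀ i : Fin k, (W i.succ).edges ≠ [] := by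
    intro i h
    have hlen : (W i.succ).length = 0 := by
      have := (W i.succ).length_edges
      rw [h] at this
      simpa using this.symm
    exact (hfresh i.succ (by simp only [Fin.val_succ]; omega)).1 (Walk.eq_of_length_eq_zero hlen)
  choose f hf using fun i : Fin k => List.exists_mem_of_ne_nil _ (hne i)
  have hfC : ∀ i, f i ∈ (C i).edgeSet := fun i => (hC i).2.2.1 _ (hf i)
  have hfnot : ∀ i j : Fin k, j < i → f i ∉ (C j).edgeSet := by
    intro i j hji hmem
    have hij : i ≠ j := (ne_of_gt hji)
    rcases (hC j).2.2.2 _ hmem with h | ⟨j', hj', hj'e⟩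
    · exact hdisj i.succ j.succ (fun hh => hij (Fin.succ_injective _ hh)) (f i) (hf i) h
    · have : i.succ ≠ j' := by
        intro hh
        rw [← hh, Fin.lt_def, Fin.val_succ, Fin.val_succ] at hj'
        have := hji
        rw [Fin.lt_def] at this
        omega
      exact hdisj i.succ j' this (f i) (hf i) hj'e
  -- linear independence of the indexed family
  have hliFin : LinearIndependent (ZMod 2) (fun i : Fin k => edgeVec (C i)) := by
    rw [Fintype.linearIndependent_iff]
    intro g hg
    by_contra hcon
    push_neg at hcon
    obtain ⟨i1, hi1⟩ := hcon
    set S : Finset (Fin k) := Finset.univ.filter (fun i => g i ≠ 0) with hS_def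
    have hSne : S.Nonempty := ⟨i1, by simp [hS_def, hi1]⟩
    set i₀ := S.max' hSne with hi0_def
    have hi₀S : i₀ ∈ S := S.max'_mem hSne
    have hgi₀ : g i₀ ≠ 0 := by
      have := hi₀S
      simp [hS_def] at this
      exact this
    have heval := congrFun hg (f i₀)
    rw [Finset.sum_apply] at heval
    have hsingle : ∑ i : Fin k, (g i • edgeVec (C i)) (f i₀) = g i₀ := by
      rw [Finset.sum_eq_single i₀]
      · rw [Pi.smul_apply, smul_eq_mul]
        have : edgeVec (C i₀) (f i₀) = 1 := by simp [edgeVec, hfC i₀]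
        rw [this, mul_one]
      · intro i _ hii₀
        rw [Pi.smul_apply, smul_eq_mul]
        by_cases hgi : g i = 0
        · rw [hgi, zero_mul]
        · have hiS : i ∈ S := by simp [hS_def, hgi]
          have hile : i ≤ i₀ := S.le_max' i hiS
          have hilt : i < i₀ := lt_of_le_of_ne hile hii₀
          have : edgeVec (C i) (f i₀) = 0 := by
            simp [edgeVec, hfnot i₀ i hilt]
          rw [this, mul_zero]
      · intro h; exact absurd (Finset.mem_univ i₀) h
    rw [hsingle] at heval
    exact hgi₀ heval
  have hli : LinearIndependent (ZMod 2) (fun D : Set.range C => edgeVec D.1) := by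
    have hσ : ∀ D : Set.range C, ∃ i : Fin k, C i = D.1 := fun D => D.2
    choose σ hσspec using hσ
    have hσinj : Function.Injective σ := by
      intro D D' hDD'
      apply Subtype.ext
      rw [← hσspec D, ← hσspec D', hDD']
    have := hliFin.comp σ hσinj
    convert this using 1
    funext D
    simp only [Function.comp_apply, hσspec D]
  -- span equality
  have hspan : Submodule.span (ZMod 2) (edgeVec '' Set.range C) = cycleSpace G := by
    apply le_antisymm
    · apply Submodule.span_le.mpr
      rintro y ⟨D, ⟨i, rfl⟩, rfl⟩
      exact Submodule.subset_span ⟨C i, (hC i).1, rfl⟩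
    · rw [cycleSpace]
      apply Submodule.span_le.mpr
      rintro y ⟨D, hD, rfl⟩
      apply key (k + 1) (edgeVec D) (deg_cycle hD)
      intro e hxe
      have heD : e ∈ D.edgeSet := by
        by_contra h
        exact hxe (by simp [edgeVec, h])
      have heG : e ∈ G.edgeSet := D.edgeSet_subset heD
      obtain ⟨j, hje⟩ := (hedges e).mp heG
      exact ⟨j, j.isLt, hje⟩
  exact ⟨⟨fun D hD => by obtain ⟨i, rfl⟩ := hD; exact (hC i).1, hli, hspan⟩,
    fun i => (hC i).2.1⟩
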